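/- Let ν be a probability measure on ℝ^d, σ > 0, and F : ℝ^d × P(ℝ^d) → ℝ. For probability measures μ, m on ℝ^d define the free energy Φ(μ, m) := ∫ F(x, m) μ(dx) + σ·H(μ|ν), where H(μ|ν) ∈ [0, ∞] is the Kullback–Leibler divergence (relative entropy) of μ with respect to ν. Let m, m' be probability measures on ℝ^d with H(m|ν) < ∞ and H(m'|ν) < ∞, such that F(·, m) and F(·, m') are integrable with respect to both m and m', and such that m minimizes μ ↦ Φ(μ, m) and m' minimizes μ ↦ Φ(μ, m') over all probability measures on ℝ^d. Then ∫ (F(x, m) − F(x, m')) m(dx) − ∫ (F(x, m) − F(x, m')) m'(dx) ≤ 0. In particular, if F is strictly Lasry–Lions monotone, then m = m'. -/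

import Mathlib

open MeasureTheory
open scoped Classical

/-- The Kullback–Leibler divergence (relative entropy) `H(μ|ν) ∈ ℝ ∪ {+∞}`:
`∫ log(dμ/dν) dμ` if `μ ≪ ν` and the integral is defined, `+∞` otherwise. -/
noncomputable def relEntropy {d : ℕ}
    (μ ν : Measure (EuclideanSpace ℝ (Fin d))) : EReal :=
  if μ ≪ ν ∧ Integrable (fun x => Real.log ((μ.rnDeriv ν x).toReal)) μ
  then ((∫ x, Real.log ((μ.rnDeriv ν x).toReal) ∂μ : ℝ) : EReal)
  else ⊤

/-- The free energy `Φ(μ, m) := ∫ F(x, m) μ(dx) + σ·H(μ|ν)`. -/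
noncomputable def freeEnergy {d : ℕ} (σ : ℝ)
    (ν : Measure (EuclideanSpace ℝ (Fin d)))
    (F : EuclideanSpace ℝ (Fin d) → Measure (EuclideanSpace ℝ (Fin d)) → ℝ)
    (μ m : Measure (EuclideanSpace ℝ (Fin d))) : EReal :=
  ((∫ x, F x m ∂μ : ℝ) : EReal) + (σ : EReal) * relEntropy μ ν

/-- If `m` minimizes `μ ↦ Φ(μ, m)` and `m'` minimizes `μ ↦ Φ(μ, m')`,
then the Lasry–Lions quantity `∫ (F(·,m) − F(·,m')) d(m − m')` is `≤ 0`; in particular,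
if `F` is strictly Lasry–Lions monotone then `m = m'`. -/
theorem stmt9 {d : ℕ} (ν : Measure (EuclideanSpace ℝ (Fin d))) [IsProbabilityMeasure ν]
    (σ : ℝ) (hσ : 0 < σ)
    (F : EuclideanSpace ℝ (Fin d) → Measure (EuclideanSpace ℝ (Fin d)) → ℝ)
    (m m' : Measure (EuclideanSpace ℝ (Fin d)))
    [IsProbabilityMeasure m] [IsProbabilityMeasure m']
    (hHm : relEntropy m ν ≠ ⊤) (hHm' : relEntropy m' ν ≠ ⊤)
    (h₁ : Integrable (fun x => F x m) m) (h₂ : Integrable (fun x => F x m) m')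
    (h₃ : Integrable (fun x => F x m') m) (h₄ : Integrable (fun x => F x m') m')
    (hmin : ∀ μ : Measure (EuclideanSpace ℝ (Fin d)), IsProbabilityMeasure μ →
      Integrable (fun x => F x m) μ → freeEnergy σ ν F m m ≤ freeEnergy σ ν F μ m)
    (hmin' : ∀ μ : Measure (EuclideanSpace ℝ (Fin d)), IsProbabilityMeasure μ →
      Integrable (fun x => F x m') μ → freeEnergy σ ν F m' m' ≤ freeEnergy σ ν F μ m') :
    ((∫ x, (F x m - F x m') ∂m) - (∫ x, (F x m - F x m') ∂m') ≤ 0) ∧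
    ((∀ μ₁ μ₂ : Measure (EuclideanSpace ℝ (Fin d)),
        IsProbabilityMeasure μ₁ → IsProbabilityMeasure μ₂ → μ₁ ≠ μ₂ →
        Integrable (fun x => F x μ₁) μ₁ → Integrable (fun x => F x μ₁) μ₂ →
        Integrable (fun x => F x μ₂) μ₁ → Integrable (fun x => F x μ₂) μ₂ →
        0 < (∫ x, (F x μ₁ - F x μ₂) ∂μ₁) - (∫ x, (F x μ₁ - F x μ₂) ∂μ₂)) → m = m') := by
  have hm : m ≪ ν ∧ Integrable (fun x => Real.log ((m.rnDeriv ν x).toReal)) m := by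
    by_contra h; exact hHm (by simp [relEntropy, h])
  have hm' : m' ≪ ν ∧ Integrable (fun x => Real.log ((m'.rnDeriv ν x).toReal)) m' := by
    by_contra h; exact hHm' (by simp [relEntropy, h])
  set a := ∫ x, Real.log ((m.rnDeriv ν x).toReal) ∂m with ha_def
  set b := ∫ x, Real.log ((m'.rnDeriv ν x).toReal) ∂m' with hb_def
  have ha : relEntropy m ν = (a : EReal) := by simp [relEntropy, hm, ha_def]
  have hb : relEntropy m' ν = (b : EReal) := by simp [relEntropy, hm', hb_def]
  have I1 := hmin m' inferInstance h₂
  have I2 := hmin' m inferInstance h₃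
  rw [freeEnergy, freeEnergy, ha, hb, ← EReal.coe_mul, ← EReal.coe_mul,
    ← EReal.coe_add, ← EReal.coe_add, EReal.coe_le_coe_iff] at I1
  rw [freeEnergy, freeEnergy, hb, ha, ← EReal.coe_mul, ← EReal.coe_mul,
    ← EReal.coe_add, ← EReal.coe_add, EReal.coe_le_coe_iff] at I2
  have e1 : ∫ x, (F x m - F x m') ∂m = (∫ x, F x m ∂m) - ∫ x, F x m' ∂m :=
    integral_sub h₁ h₃
  have e2 : ∫ x, (F x m - F x m') ∂m' = (∫ x, F x m ∂m') - ∫ x, F x m' ∂m' :=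
    integral_sub h₂ h₄
  have key : (∫ x, (F x m - F x m') ∂m) - (∫ x, (F x m - F x m') ∂m') ≤ 0 := by
    rw [e1, e2]; linarith
  refine ⟨key, fun h => ?_⟩
  by_contra hne
  have := h m m' inferInstance inferInstance hne h₁ h₂ h₃ h₄
  linarith
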